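/- For every real t > 1, (t + 1/t − t^(1/3))·√(t² − 1) − arccosh(t) > 0. -/

import Mathlib

open Real

noncomputable def arccosh (t : ℝ) : ℝ := Real.log (t + Real.sqrt (t ^ 2 - 1))

theorem stmt_6 (t : ℝ) (ht : 1 < t) :
    (t + 1 / t - t ^ ((1 : ℝ) / 3)) * Real.sqrt (t ^ 2 - 1) - arccosh t > 0 := by
  have hF1 : (fun x : ℝ => (x + 1 / x - x ^ ((1 : ℝ) / 3)) * Real.sqrt (x ^ 2 - 1)
      - Real.log (x + Real.sqrt (x ^ 2 - 1))) 1 = 0 := by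
    norm_num [Real.one_rpow, Real.sqrt_zero]
  set F : ℝ → ℝ := fun x => (x + 1 / x - x ^ ((1 : ℝ) / 3)) * Real.sqrt (x ^ 2 - 1)
      - Real.log (x + Real.sqrt (x ^ 2 - 1)) with hFdef
  -- continuity of F on [1, ∞)
  have hcont : ContinuousOn F (Set.Ici (1 : ℝ)) := by
    apply ContinuousOn.sub
    · apply ContinuousOn.mul
      · apply ContinuousOn.sub
        · apply ContinuousOn.add continuousOn_id
          exact ContinuousOn.div continuousOn_const continuousOn_id
            (fun x hx => by have : (1:ℝ) ≤ x := hx; positivity)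
        · exact ContinuousOn.rpow_const continuousOn_id
            (fun x hx => Or.inl (by have : (1:ℝ) ≤ x := hx; positivity))
      · exact (Real.continuous_sqrt.comp ((continuous_pow 2).sub continuous_const)).continuousOn
    · apply ContinuousOn.log
      · exact (continuous_id.add (Real.continuous_sqrt.comp
          ((continuous_pow 2).sub continuous_const))).continuousOn
      · intro x hx
        have hx1 : (1:ℝ) ≤ x := hx
        have : 0 ≤ Real.sqrt (x ^ 2 - 1) := Real.sqrt_nonneg _
        positivity
  -- positivity of the derivative on (1, ∞)
  have hderiv : ∀ x ∈ interior (Set.Ici (1:ℝ)), 0 < deriv F x := by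
    intro x hx
    rw [interior_Ici] at hx
    have hx1 : (1:ℝ) < x := hx
    have hx0 : (0:ℝ) < x := by linarith
    have hs2pos : (0:ℝ) < x ^ 2 - 1 := by nlinarith
    set s : ℝ := Real.sqrt (x ^ 2 - 1) with hsdef
    have hs : 0 < s := Real.sqrt_pos.mpr hs2pos
    have hs2 : s ^ 2 = x ^ 2 - 1 := Real.sq_sqrt hs2pos.le
    set c : ℝ := x ^ ((1 : ℝ) / 3) with hcdef
    have hc1 : 1 < c := by
      rw [hcdef]
      exact Real.one_lt_rpow_iff_of_pos hx0 |>.mpr (Or.inl ⟨hx1, by norm_num⟩)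
    have hc0 : 0 < c := by linarith
    have hcx : c ^ 3 = x := by
      rw [hcdef, ← Real.rpow_natCast (x ^ ((1:ℝ)/3)) 3, ← Real.rpow_mul hx0.le]
      norm_num
    have hpow : x ^ ((1:ℝ)/3 - 1) = 1 / c ^ 2 := by
      rw [show ((1:ℝ)/3 - 1) = -(2/3) by norm_num, Real.rpow_neg hx0.le, hcdef,
        ← Real.rpow_natCast (x ^ ((1:ℝ)/3)) 2, ← Real.rpow_mul hx0.le]
      norm_num
    -- the derivative of F at x
    have hsq : HasDerivAt (fun y : ℝ => Real.sqrt (y ^ 2 - 1)) (x / s) x := by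
      have hinner : HasDerivAt (fun y : ℝ => y ^ 2 - 1) (2 * x) x := by
        simpa using ((hasDerivAt_pow 2 x).sub_const 1)
      have := (Real.hasDerivAt_sqrt (ne_of_gt hs2pos)).comp x hinner
      have e : 1 / (2 * √(x ^ 2 - 1)) * (2 * x) = x / s := by
        rw [← hsdef]
        field_simp
      rw [e] at this
      exact this
    have hA : HasDerivAt (fun y : ℝ => y + 1 / y - y ^ ((1:ℝ)/3))
        (1 - 1 / x ^ 2 - (1/3) * (1 / c ^ 2)) x := by
      have h1 : HasDerivAt (fun y : ℝ => y + 1 / y) (1 - 1 / x ^ 2) x := by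
        have := (hasDerivAt_id x).add ((hasDerivAt_inv (ne_of_gt hx0)))
        rw [show (1:ℝ) - 1 / x ^ 2 = 1 + -(x ^ 2)⁻¹ by ring,
          show (fun y : ℝ => y + 1 / y) = id + fun y => y⁻¹ by funext y; simp [one_div]]
        exact this
      have h2 : HasDerivAt (fun y : ℝ => y ^ ((1:ℝ)/3)) (((1:ℝ)/3) * x ^ ((1:ℝ)/3 - 1)) x :=
        Real.hasDerivAt_rpow_const (Or.inl (ne_of_gt hx0))
      have := h1.sub h2
      rw [hpow] at this
      exact this
    have hlog : HasDerivAt (fun y : ℝ => Real.log (y + Real.sqrt (y ^ 2 - 1))) (1 / s) x := by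
      have hinner : HasDerivAt (fun y : ℝ => y + Real.sqrt (y ^ 2 - 1)) (1 + x / s) x :=
        (hasDerivAt_id x).add hsq
      have hxs : 0 < x + s := by positivity
      have := (Real.hasDerivAt_log (ne_of_gt hxs)).comp x hinner
      have e : (x + s)⁻¹ * (1 + x / s) = 1 / s := by
        field_simp
        ring
      rw [e] at this
      exact this
    have hF : HasDerivAt F
        ((1 - 1 / x ^ 2 - (1/3) * (1 / c ^ 2)) * s + (x + 1 / x - c) * (x / s) - 1 / s) x := by
      have := (hA.mul hsq).sub hlog
      exact this
    rw [hF.deriv]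
    set D : ℝ := (1 - 1 / x ^ 2 - (1/3) * (1 / c ^ 2)) * s + (x + 1 / x - c) * (x / s) - 1 / s
      with hDdef
    have hQpos : 0 < (c - 1) ^ 2 * (6*c^10 + 12*c^9 + 14*c^8 + 16*c^7 + 18*c^6 + 20*c^5
        + 16*c^4 + 12*c^3 + 9*c^2 + 6*c + 3) := by
      have h1 : 0 < (c - 1) ^ 2 := pow_pos (by linarith) 2
      have h2 : 0 < 6*c^10 + 12*c^9 + 14*c^8 + 16*c^7 + 18*c^6 + 20*c^5
          + 16*c^4 + 12*c^3 + 9*c^2 + 6*c + 3 := by positivity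
      exact mul_pos h1 h2
    have hs2c : s ^ 2 = c ^ 6 - 1 := by rw [hs2, ← hcx]; ring
    have e1 : s * D = (1 - 1 / x ^ 2 - (1/3) * (1 / c ^ 2)) * s ^ 2 + (x + 1 / x - c) * x - 1 := by
      rw [hDdef]
      field_simp
    have hsD_eq : s * D = (1 - 1 / x ^ 2 - (1/3) * (1 / c ^ 2)) * (c ^ 6 - 1)
        + (x + 1 / x - c) * x - 1 := by rw [e1, hs2c]
    have hkey : s * D * (3 * c ^ 6) = (c - 1) ^ 2 * (6*c^10 + 12*c^9 + 14*c^8 + 16*c^7 + 18*c^6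
        + 20*c^5 + 16*c^4 + 12*c^3 + 9*c^2 + 6*c + 3) := by
      rw [hsD_eq, ← hcx]
      field_simp
      ring
    have hsD : 0 < s * D := by
      have h3c : (0:ℝ) < 3 * c ^ 6 := by positivity
      nlinarith [hkey, hQpos]
    have hDeq : D = (s * D) / s := by field_simp
    rw [hDeq]
    exact div_pos hsD hs
  have hmono : StrictMonoOn F (Set.Ici (1:ℝ)) :=
    strictMonoOn_of_deriv_pos (convex_Ici 1) hcont hderiv
  have := hmono (Set.self_mem_Ici) (Set.mem_Ici.mpr ht.le) ht
  rw [hF1] at this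
  simpa [hFdef, arccosh] using this
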